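/- The first Neumann eigenvalue μ₁(a,b) of the one-dimensional Hermite operator on an interval (a,b) satisfies μ₁(a,b) = λ₁(a,b) + 1, where λ₁(a,b) is the first Dirichlet eigenvalue of the Hermite operator on (a,b). -/

import Mathlib

open Real MeasureTheory

/-- The one-dimensional standard Gaussian density. -/
noncomputable def gauss (x : ℝ) : ℝ := (2 * π) ^ (-(1:ℝ)/2) * Real.exp (-x^2/2)

lemma gauss_pos (x : ℝ) : 0 < gauss x := by
  have h2 : (0:ℝ) < 2 * π := by positivity
  exact mul_pos (Real.rpow_pos_of_pos h2 _) (Real.exp_pos _)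

lemma gauss_ne (x : ℝ) : gauss x ≠ 0 := (gauss_pos x).ne'

lemma hasDerivAt_gauss (x : ℝ) : HasDerivAt gauss (-x * gauss x) x := by
  have h1 : HasDerivAt (fun y : ℝ => -y^2/2) (-x) x := by
    have := ((hasDerivAt_pow 2 x).neg.div_const 2)
    simpa using this.congr_deriv (by ring)
  have h2 := (h1.exp).const_mul ((2 * π) ^ (-(1:ℝ)/2))
  unfold gauss
  exact h2.congr_deriv (by ring)

lemma contDiff_gauss : ContDiff ℝ 1 gauss := by
  unfold gauss
  exact contDiff_const.mul (Real.contDiff_exp.comp (((contDiff_id.pow 2).neg).div_const 2))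

lemma continuous_gauss : Continuous gauss := contDiff_gauss.continuous

lemma deriv_gauss (x : ℝ) : deriv gauss x = -x * gauss x := (hasDerivAt_gauss x).deriv

lemma intOn {a b : ℝ} {f : ℝ → ℝ} (hf : Continuous f) : IntegrableOn f (Set.Ioo a b) :=
  (hf.continuousOn.integrableOn_compact isCompact_Icc).mono_set Set.Ioo_subset_Icc_self

lemma cont_deriv {w : ℝ → ℝ} (hw : ContDiff ℝ 1 w) : Continuous (deriv w) :=
  (contDiff_one_iff_deriv.mp hw).2

lemma ftc {a b : ℝ} (hab : a ≤ b) {F φ : ℝ → ℝ} (hF : ∀ x, HasDerivAt F (φ x) x)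
    (hφ : Continuous φ) : ∫ x in Set.Ioo a b, φ x = F b - F a := by
  rw [← MeasureTheory.integral_Ioc_eq_integral_Ioo, ← intervalIntegral.integral_of_le hab]
  exact intervalIntegral.integral_eq_sub_of_hasDerivAt (fun x _ => hF x)
    (hφ.intervalIntegrable a b)

lemma cont_int_zero {a b : ℝ} {f : ℝ → ℝ} (hf : Continuous f)
    (h0 : ∫ x in Set.Ioo a b, (f x)^2 * gauss x = 0) : ∀ x ∈ Set.Ioo a b, f x = 0 := by
  set g : ℝ → ℝ := fun x => (f x)^2 * gauss x with hg
  have hgc : Continuous g := (hf.pow 2).mul continuous_gauss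
  have hgnn : ∀ x, 0 ≤ g x := fun x => mul_nonneg (sq_nonneg _) (gauss_pos x).le
  have hint : IntegrableOn g (Set.Ioo a b) := intOn hgc
  have hae : g =ᵐ[volume.restrict (Set.Ioo a b)] 0 :=
    (MeasureTheory.integral_eq_zero_iff_of_nonneg hgnn hint).mp h0
  have hnull : volume ({x | g x ≠ 0} ∩ Set.Ioo a b) = 0 := by
    have h2 : volume.restrict (Set.Ioo a b) {x | g x ≠ 0} = 0 := by
      have := MeasureTheory.ae_iff.mp hae
      simpa using this
    rwa [MeasureTheory.Measure.restrict_apply' measurableSet_Ioo] at h2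
  intro x hx
  by_contra hfx
  have hgx : 0 < g x := mul_pos (by positivity) (gauss_pos x)
  obtain ⟨U, hUo, hxU, hU⟩ : ∃ U, IsOpen U ∧ x ∈ U ∧ ∀ y ∈ U, 0 < g y := by
    have := hgc.continuousAt (x := x)
    obtain ⟨U, hU, hUo, hxU⟩ := eventually_nhds_iff.mp (continuousAt_const.eventually_lt this hgx)
    exact ⟨U, hUo, hxU, hU⟩
  have hsub : U ∩ Set.Ioo a b ⊆ {x | g x ≠ 0} ∩ Set.Ioo a b := by
    intro y hy; exact ⟨(hU y hy.1).ne', hy.2⟩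
  have hpos : 0 < volume (U ∩ Set.Ioo a b) :=
    (hUo.inter isOpen_Ioo).measure_pos volume ⟨x, hxU, hx⟩
  exact absurd (MeasureTheory.measure_mono_null hsub hnull) hpos.ne'

lemma int_gauss_pow {a b : ℝ} {f : ℝ → ℝ} (hf : Continuous f) :
    IntegrableOn (fun x => (f x)^2 * gauss x) (Set.Ioo a b) := intOn ((hf.pow 2).mul continuous_gauss)

lemma CS {a b : ℝ} {f g : ℝ → ℝ} (hf : Continuous f) (hg : Continuous g) :
    (∫ x in Set.Ioo a b, f x * g x * gauss x)^2 ≤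
    (∫ x in Set.Ioo a b, (f x)^2 * gauss x) * (∫ x in Set.Ioo a b, (g x)^2 * gauss x) := by
  set A := ∫ x in Set.Ioo a b, (f x)^2 * gauss x with hA
  set B := ∫ x in Set.Ioo a b, (g x)^2 * gauss x with hB
  set C := ∫ x in Set.Ioo a b, f x * g x * gauss x with hC
  have hA0 : 0 ≤ A := setIntegral_nonneg measurableSet_Ioo
    (fun x _ => mul_nonneg (sq_nonneg _) (gauss_pos x).le)
  have hB0 : 0 ≤ B := setIntegral_nonneg measurableSet_Ioo
    (fun x _ => mul_nonneg (sq_nonneg _) (gauss_pos x).le)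
  rcases eq_or_lt_of_le hB0 with hB1 | hB1
  · have hgz : ∀ x ∈ Set.Ioo a b, g x = 0 := cont_int_zero hg hB1.symm
    have hCz : C = 0 := by
      rw [hC, MeasureTheory.setIntegral_congr_fun measurableSet_Ioo
        (fun x hx => by simp [hgz x hx] : Set.EqOn (fun x => f x * g x * gauss x) (fun _ => (0:ℝ)) _)]
      simp
    rw [hCz, ← hB1]
    simp
  · have key : 0 ≤ ∫ x in Set.Ioo a b, (B * f x - C * g x)^2 * gauss x :=
      setIntegral_nonneg measurableSet_Ioo
        (fun x _ => mul_nonneg (sq_nonneg _) (gauss_pos x).le)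
    have expand : ∫ x in Set.Ioo a b, (B * f x - C * g x)^2 * gauss x
        = B^2 * A - (2*B*C) * C + C^2 * B := by
      have hfe : (fun x => (B * f x - C * g x)^2 * gauss x)
          = fun x => (B^2 * ((f x)^2 * gauss x) - (2*B*C) * (f x * g x * gauss x))
              + C^2 * ((g x)^2 * gauss x) := funext fun x => by ring
      have h1 : Integrable (fun x => B^2 * ((f x)^2 * gauss x))
          (volume.restrict (Set.Ioo a b)) := (int_gauss_pow hf).const_mul _
      have h2 : Integrable (fun x => (2*B*C) * (f x * g x * gauss x))
          (volume.restrict (Set.Ioo a b)) :=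
        (intOn ((hf.mul hg).mul continuous_gauss)).const_mul _
      have h3 : Integrable (fun x => C^2 * ((g x)^2 * gauss x))
          (volume.restrict (Set.Ioo a b)) := (int_gauss_pow hg).const_mul _
      have e1 := MeasureTheory.integral_add (h1.sub h2) h3
      have e2 := MeasureTheory.integral_sub h1 h2
      simp only [Pi.add_apply, Pi.sub_apply] at e1 e2
      rw [hfe, e1, e2, integral_const_mul, integral_const_mul, integral_const_mul]
    rw [expand] at key
    nlinarith

lemma hasDerivAt_of_contDiff {w : ℝ → ℝ} (hw : ContDiff ℝ 1 w) (x : ℝ) :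
    HasDerivAt w (deriv w x) x := (hw.differentiable one_ne_zero x).hasDerivAt

lemma identA {a b : ℝ} (hab : a ≤ b) {w : ℝ → ℝ} (hw : ContDiff ℝ 1 w)
    (hwa : w a = 0) (hwb : w b = 0) :
    ∫ x in Set.Ioo a b, (deriv w x - x * w x)^2 * gauss x
      = (∫ x in Set.Ioo a b, (deriv w x)^2 * gauss x) + ∫ x in Set.Ioo a b, (w x)^2 * gauss x := by
  have hw' : Continuous (deriv w) := cont_deriv hw
  have hwc : Continuous w := hw.continuous
  set φ : ℝ → ℝ := fun x => ((w x)^2 + 2*x*(w x)*(deriv w x) - x^2*(w x)^2) * gauss x with hφ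
  have hφc : Continuous φ :=
    (((hwc.pow 2).add (((continuous_const.mul continuous_id).mul hwc).mul hw')).sub
      ((continuous_id.pow 2).mul (hwc.pow 2))).mul continuous_gauss
  have hF : ∀ x, HasDerivAt (fun y => y * (w y)^2 * gauss y) (φ x) x := by
    intro x
    have h1 : HasDerivAt (fun y => y * (w y)^2)
        (1 * (w x)^2 + x * (2 * w x ^ 1 * deriv w x)) x :=
      (hasDerivAt_id x).mul ((hasDerivAt_of_contDiff hw x).pow 2)
    have h2 := h1.mul (hasDerivAt_gauss x)
    exact h2.congr_deriv (by simp only [hφ]; ring)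
  have hzero : ∫ x in Set.Ioo a b, φ x = 0 := by
    rw [ftc hab hF hφc, hwa, hwb]; ring
  have hfe : (fun x => (deriv w x - x * w x)^2 * gauss x)
      = fun x => ((deriv w x)^2 * gauss x + (w x)^2 * gauss x) - φ x := funext fun x => by
    rw [hφ]; ring
  have e1 := MeasureTheory.integral_sub
    ((int_gauss_pow hw').add (int_gauss_pow hwc) :
      Integrable (fun x => (deriv w x)^2 * gauss x + (w x)^2 * gauss x)
        (volume.restrict (Set.Ioo a b))) (intOn hφc)
  have e2 := MeasureTheory.integral_add (int_gauss_pow hw')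
    (int_gauss_pow hwc (a := a) (b := b))
  simp only [Pi.add_apply, Pi.sub_apply] at e1 e2
  rw [hfe, e1, e2, hzero, sub_zero]

lemma identB {a b : ℝ} (hab : a ≤ b) {z w : ℝ → ℝ} (hz : ContDiff ℝ 1 z) (hw : ContDiff ℝ 1 w)
    (hwa : w a = 0) (hwb : w b = 0) :
    ∫ x in Set.Ioo a b, z x * (deriv w x - x * w x) * gauss x
      = - ∫ x in Set.Ioo a b, deriv z x * w x * gauss x := by
  have hw' : Continuous (deriv w) := cont_deriv hw
  have hz' : Continuous (deriv z) := cont_deriv hz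
  set φ : ℝ → ℝ := fun x => deriv z x * w x * gauss x + z x * (deriv w x - x * w x) * gauss x with hφ
  have hφc : Continuous φ := by
    apply Continuous.add
    · exact (hz'.mul hw.continuous).mul continuous_gauss
    · exact (hz.continuous.mul ((hw'.sub (continuous_id.mul hw.continuous)))).mul continuous_gauss
  have hF : ∀ x, HasDerivAt (fun y => z y * w y * gauss y) (φ x) x := by
    intro x
    have h2 := ((hasDerivAt_of_contDiff hz x).mul (hasDerivAt_of_contDiff hw x)).mul
      (hasDerivAt_gauss x)
    exact h2.congr_deriv (by simp only [hφ, Pi.mul_apply]; ring)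
  have hzero : ∫ x in Set.Ioo a b, φ x = 0 := by
    rw [ftc hab hF hφc, hwa, hwb]; ring
  have hsplit := MeasureTheory.integral_add
    (intOn ((hz'.mul hw.continuous).mul continuous_gauss) :
      Integrable (fun x => deriv z x * w x * gauss x) (volume.restrict (Set.Ioo a b)))
    (intOn ((hz.continuous.mul ((hw'.sub (continuous_id.mul hw.continuous)))).mul continuous_gauss) :
      Integrable (fun x => z x * (deriv w x - x * w x) * gauss x)
        (volume.restrict (Set.Ioo a b)))
  rw [hφ] at hzero
  rw [hzero] at hsplit
  linarith [hsplit]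

/-- The Gaussian Rayleigh quotient of `z` on the interval `(a,b)`. -/
noncomputable def RayN (a b : ℝ) (z : ℝ → ℝ) : ℝ :=
  (∫ x in Set.Ioo a b, (deriv z x)^2 * gauss x) / (∫ x in Set.Ioo a b, (z x)^2 * gauss x)

/-- The first nontrivial Neumann eigenvalue `μ₁(a,b)` of the Hermite operator `-v'' + x v'`
on `(a,b)`, via its variational characterization: the infimum of the Gaussian Rayleigh
quotient over nonzero functions with zero Gaussian mean. -/
noncomputable def neuEig (a b : ℝ) : ℝ :=
  sInf {r | ∃ z : ℝ → ℝ, ContDiff ℝ 1 z ∧ (∫ x in Set.Ioo a b, z x * gauss x) = 0 ∧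
    (∫ x in Set.Ioo a b, (z x)^2 * gauss x) ≠ 0 ∧ r = RayN a b z}

/-- The first Dirichlet eigenvalue `λ₁(a,b)` of the Hermite operator `-w'' + x w'`
on `(a,b)`, via its variational characterization over nonzero functions vanishing
at the endpoints. -/
noncomputable def dirEig (a b : ℝ) : ℝ :=
  sInf {r | ∃ w : ℝ → ℝ, ContDiff ℝ 1 w ∧ w a = 0 ∧ w b = 0 ∧
    (∫ x in Set.Ioo a b, (w x)^2 * gauss x) ≠ 0 ∧ r = RayN a b w}

/-- `μ₁(a,b) = λ₁(a,b) + 1`: the first nontrivial Neumann eigenvalue of the 1D Hermite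
operator equals the first Dirichlet eigenvalue plus one. -/
lemma sqint_nonneg (a b : ℝ) (f : ℝ → ℝ) : 0 ≤ ∫ x in Set.Ioo a b, (f x)^2 * gauss x :=
  setIntegral_nonneg measurableSet_Ioo fun x _ => mul_nonneg (sq_nonneg _) (gauss_pos x).le

lemma rayN_nonneg (a b : ℝ) (z : ℝ → ℝ) : 0 ≤ RayN a b z :=
  div_nonneg (sqint_nonneg a b _) (sqint_nonneg a b _)

lemma dirEig_nonneg (a b : ℝ) : 0 ≤ dirEig a b :=
  Real.sInf_nonneg (fun r hr => by
    obtain ⟨w, _, _, _, _, hr⟩ := hr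
    rw [hr]; exact rayN_nonneg a b w)

lemma dir_bdd (a b : ℝ) : BddBelow {r | ∃ w : ℝ → ℝ, ContDiff ℝ 1 w ∧ w a = 0 ∧ w b = 0 ∧
    (∫ x in Set.Ioo a b, (w x)^2 * gauss x) ≠ 0 ∧ r = RayN a b w} :=
  ⟨0, fun r hr => by obtain ⟨w, _, _, _, _, hr⟩ := hr; rw [hr]; exact rayN_nonneg a b w⟩

lemma neu_bdd (a b : ℝ) : BddBelow {r | ∃ z : ℝ → ℝ, ContDiff ℝ 1 z ∧
    (∫ x in Set.Ioo a b, z x * gauss x) = 0 ∧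
    (∫ x in Set.Ioo a b, (z x)^2 * gauss x) ≠ 0 ∧ r = RayN a b z} :=
  ⟨0, fun r hr => by obtain ⟨z, _, _, _, hr⟩ := hr; rw [hr]; exact rayN_nonneg a b z⟩

lemma int_ne_zero {a b : ℝ} {f : ℝ → ℝ} (hf : Continuous f) {x₀ : ℝ} (hx₀ : x₀ ∈ Set.Ioo a b)
    (hfx : f x₀ ≠ 0) : (∫ x in Set.Ioo a b, (f x)^2 * gauss x) ≠ 0 := fun h0 =>
  hfx (cont_int_zero hf h0 x₀ hx₀)

lemma deriv_zero_of_zero_on {a b x : ℝ} (hx : x ∈ Set.Ioo a b) {f : ℝ → ℝ}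
    (hf : ∀ y ∈ Set.Ioo a b, f y = 0) : deriv f x = 0 := by
  have he : f =ᶠ[nhds x] fun _ => (0:ℝ) := by
    filter_upwards [isOpen_Ioo.mem_nhds hx] with y hy using hf y hy
  rw [he.deriv_eq]
  exact deriv_const x 0

lemma ray_ge (a b : ℝ) (h : a < b) {z : ℝ → ℝ} (hz : ContDiff ℝ 1 z)
    (hmean : (∫ x in Set.Ioo a b, z x * gauss x) = 0)
    (hD : (∫ x in Set.Ioo a b, (z x)^2 * gauss x) ≠ 0) :
    dirEig a b + 1 ≤ RayN a b z := by
  set hfun : ℝ → ℝ := fun x => ∫ t in a..x, z t * gauss t with hhdef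
  set w : ℝ → ℝ := fun x => hfun x / gauss x with hwdef
  have hzγc : Continuous (fun t => z t * gauss t) := hz.continuous.mul continuous_gauss
  have hhd : ∀ x, HasDerivAt hfun (z x * gauss x) x := fun x =>
    intervalIntegral.integral_hasDerivAt_right (hzγc.intervalIntegrable a x)
      hzγc.aestronglyMeasurable.stronglyMeasurableAtFilter hzγc.continuousAt
  have hhc1 : ContDiff ℝ 1 hfun := contDiff_one_iff_deriv.mpr
    ⟨fun x => (hhd x).differentiableAt, by
      have hde : deriv hfun = fun x => z x * gauss x := funext fun x => (hhd x).deriv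
      rw [hde]; exact hzγc⟩
  have hwc1 : ContDiff ℝ 1 w := hhc1.div contDiff_gauss (fun x => gauss_ne x)
  have hwa : w a = 0 := by
    have h0 : hfun a = 0 := by rw [hhdef]; simp
    simp [hwdef, h0]
  have hwb : w b = 0 := by
    have h0 : hfun b = 0 := by
      rw [hhdef]
      simp only
      rw [intervalIntegral.integral_of_le h.le, MeasureTheory.integral_Ioc_eq_integral_Ioo]
      exact hmean
    simp [hwdef, h0]
  have hwd : ∀ x, HasDerivAt w (z x + x * w x) x := by
    intro x
    have hd := (hhd x).div (hasDerivAt_gauss x) (gauss_ne x)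
    refine hd.congr_deriv ?_
    have hne := gauss_ne x
    simp only [hwdef]
    field_simp
    ring
  have hderiv : ∀ x, deriv w x - x * w x = z x := fun x => by rw [(hwd x).deriv]; ring
  have hwcont : Continuous w := hwc1.continuous
  have hE : (∫ x in Set.Ioo a b, (w x)^2 * gauss x) ≠ 0 := by
    intro h0
    apply hD
    have hw0 := cont_int_zero hwcont h0
    have hz0 : ∀ x ∈ Set.Ioo a b, z x = 0 := by
      intro x hx
      rw [← hderiv x, deriv_zero_of_zero_on hx hw0, hw0 x hx]
      ring
    rw [MeasureTheory.setIntegral_congr_fun measurableSet_Ioo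
      (fun x hx => by simp [hz0 x hx] :
        Set.EqOn (fun x => (z x)^2 * gauss x) (fun _ => (0:ℝ)) (Set.Ioo a b))]
    simp
  have hEpos : 0 < ∫ x in Set.Ioo a b, (w x)^2 * gauss x :=
    lt_of_le_of_ne (sqint_nonneg a b w) (Ne.symm hE)
  have hDpos : 0 < ∫ x in Set.Ioo a b, (z x)^2 * gauss x :=
    lt_of_le_of_ne (sqint_nonneg a b z) (Ne.symm hD)
  have hdir : dirEig a b ≤ RayN a b w :=
    csInf_le (dir_bdd a b) ⟨w, hwc1, hwa, hwb, hE, rfl⟩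
  have hdir' : dirEig a b * (∫ x in Set.Ioo a b, (w x)^2 * gauss x)
      ≤ ∫ x in Set.Ioo a b, (deriv w x)^2 * gauss x := by
    have hr : RayN a b w = (∫ x in Set.Ioo a b, (deriv w x)^2 * gauss x) /
        (∫ x in Set.Ioo a b, (w x)^2 * gauss x) := rfl
    rw [hr] at hdir
    exact (le_div_iff₀ hEpos).mp hdir
  have hIA : (∫ x in Set.Ioo a b, (z x)^2 * gauss x)
      = (∫ x in Set.Ioo a b, (deriv w x)^2 * gauss x)
        + ∫ x in Set.Ioo a b, (w x)^2 * gauss x := by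
    rw [← identA h.le hwc1 hwa hwb]
    exact MeasureTheory.setIntegral_congr_fun measurableSet_Ioo
      (fun x _ => by rw [← hderiv x])
  have hIB : (∫ x in Set.Ioo a b, (z x)^2 * gauss x)
      = - ∫ x in Set.Ioo a b, deriv z x * w x * gauss x := by
    rw [← identB h.le hz hwc1 hwa hwb]
    exact MeasureTheory.setIntegral_congr_fun measurableSet_Ioo
      (fun x _ => by rw [hderiv x]; ring)
  have hCS : (∫ x in Set.Ioo a b, (z x)^2 * gauss x)^2
      ≤ (∫ x in Set.Ioo a b, (deriv z x)^2 * gauss x)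
        * ∫ x in Set.Ioo a b, (w x)^2 * gauss x := by
    have hc := CS (a := a) (b := b) (cont_deriv hz) hwcont
    calc (∫ x in Set.Ioo a b, (z x)^2 * gauss x)^2
        = (∫ x in Set.Ioo a b, deriv z x * w x * gauss x)^2 := by rw [hIB]; ring
    _ ≤ _ := hc
  have hd0 : 0 ≤ dirEig a b := dirEig_nonneg a b
  have hNz0 : 0 ≤ ∫ x in Set.Ioo a b, (deriv z x)^2 * gauss x := sqint_nonneg a b _
  have hEleD : (dirEig a b + 1) * (∫ x in Set.Ioo a b, (w x)^2 * gauss x)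
      ≤ ∫ x in Set.Ioo a b, (z x)^2 * gauss x := by nlinarith
  have hfin : (dirEig a b + 1) * (∫ x in Set.Ioo a b, (z x)^2 * gauss x)
      ≤ ∫ x in Set.Ioo a b, (deriv z x)^2 * gauss x := by
    nlinarith [mul_le_mul_of_nonneg_left hEleD hNz0, mul_pos hDpos hDpos]
  have hr : RayN a b z = (∫ x in Set.Ioo a b, (deriv z x)^2 * gauss x) /
      (∫ x in Set.Ioo a b, (z x)^2 * gauss x) := rfl
  rw [hr, le_div_iff₀ hDpos]
  exact hfin

lemma ray_le (a b : ℝ) (h : a < b) {w : ℝ → ℝ} (hw : ContDiff ℝ 1 w)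
    (hwa : w a = 0) (hwb : w b = 0)
    (hE : (∫ x in Set.Ioo a b, (w x)^2 * gauss x) ≠ 0) :
    neuEig a b ≤ RayN a b w + 1 := by
  set z0 : ℝ → ℝ := fun x => ∫ t in a..x, w t with hz0def
  have hz0d : ∀ x, HasDerivAt z0 (w x) x := fun x =>
    intervalIntegral.integral_hasDerivAt_right (hw.continuous.intervalIntegrable a x)
      hw.continuous.aestronglyMeasurable.stronglyMeasurableAtFilter hw.continuous.continuousAt
  have hz0cont : Continuous z0 :=
    continuous_iff_continuousAt.mpr fun x => (hz0d x).differentiableAt.continuousAt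
  have hGne : (∫ x in Set.Ioo a b, gauss x) ≠ 0 := by
    have h1 : (∫ x in Set.Ioo a b, ((1:ℝ))^2 * gauss x) ≠ 0 :=
      int_ne_zero continuous_const (Set.mem_Ioo.mpr ⟨by linarith, by linarith⟩ :
        (a+b)/2 ∈ Set.Ioo a b) one_ne_zero
    simpa using h1
  set c : ℝ := (∫ x in Set.Ioo a b, z0 x * gauss x) / (∫ x in Set.Ioo a b, gauss x) with hcdef
  set z : ℝ → ℝ := fun x => z0 x - c with hzdef
  have hzd : ∀ x, HasDerivAt z (w x) x := fun x => (hz0d x).sub_const c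
  have hz1 : ContDiff ℝ 1 z := contDiff_one_iff_deriv.mpr
    ⟨fun x => (hzd x).differentiableAt, by
      have hde : deriv z = w := funext fun x => (hzd x).deriv
      rw [hde]; exact hw.continuous⟩
  have hdz : ∀ x, deriv z x = w x := fun x => (hzd x).deriv
  have hmean : ∫ x in Set.Ioo a b, z x * gauss x = 0 := by
    have hfe : (fun x => z x * gauss x) = fun x => z0 x * gauss x - c * gauss x :=
      funext fun x => by rw [hzdef]; ring
    rw [hfe, MeasureTheory.integral_sub (intOn (f := fun x => z0 x * gauss x) (hz0cont.mul continuous_gauss))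
      ((intOn continuous_gauss).const_mul c), MeasureTheory.integral_const_mul, hcdef]
    field_simp
    ring
  have hD : (∫ x in Set.Ioo a b, (z x)^2 * gauss x) ≠ 0 := by
    intro h0
    apply hE
    have hz0' := cont_int_zero hz1.continuous h0
    have hw0 : ∀ x ∈ Set.Ioo a b, w x = 0 := fun x hx => by
      rw [← hdz x, deriv_zero_of_zero_on hx hz0']
    rw [MeasureTheory.setIntegral_congr_fun measurableSet_Ioo
      (fun x hx => by simp [hw0 x hx] :
        Set.EqOn (fun x => (w x)^2 * gauss x) (fun _ => (0:ℝ)) (Set.Ioo a b))]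
    simp
  have hEpos : 0 < ∫ x in Set.Ioo a b, (w x)^2 * gauss x :=
    lt_of_le_of_ne (sqint_nonneg a b w) (Ne.symm hE)
  have hDpos : 0 < ∫ x in Set.Ioo a b, (z x)^2 * gauss x :=
    lt_of_le_of_ne (sqint_nonneg a b z) (Ne.symm hD)
  have hIB : (∫ x in Set.Ioo a b, (w x)^2 * gauss x)
      = - ∫ x in Set.Ioo a b, z x * (deriv w x - x * w x) * gauss x := by
    rw [identB h.le hz1 hw hwa hwb, neg_neg]
    exact MeasureTheory.setIntegral_congr_fun measurableSet_Ioo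
      (fun x _ => by rw [hdz x]; ring)
  have hIA := identA h.le hw hwa hwb
  have hCS : (∫ x in Set.Ioo a b, (w x)^2 * gauss x)^2
      ≤ (∫ x in Set.Ioo a b, (z x)^2 * gauss x)
        * ((∫ x in Set.Ioo a b, (deriv w x)^2 * gauss x)
            + ∫ x in Set.Ioo a b, (w x)^2 * gauss x) := by
    have hc := CS (a := a) (b := b) hz1.continuous
      ((cont_deriv hw).sub (continuous_id.mul hw.continuous))
    calc (∫ x in Set.Ioo a b, (w x)^2 * gauss x)^2
        = (∫ x in Set.Ioo a b, z x * (deriv w x - x * w x) * gauss x)^2 := by rw [hIB]; ring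
    _ ≤ (∫ x in Set.Ioo a b, (z x)^2 * gauss x)
        * ∫ x in Set.Ioo a b, (deriv w x - x * w x)^2 * gauss x := hc
    _ = _ := by rw [hIA]
  have hrayz : RayN a b z = (∫ x in Set.Ioo a b, (w x)^2 * gauss x) /
      (∫ x in Set.Ioo a b, (z x)^2 * gauss x) := by
    have hnum : (∫ x in Set.Ioo a b, (deriv z x)^2 * gauss x)
        = ∫ x in Set.Ioo a b, (w x)^2 * gauss x :=
      MeasureTheory.setIntegral_congr_fun measurableSet_Ioo (fun x _ => by rw [hdz x])
    rw [RayN, hnum]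
  have hle1 : neuEig a b ≤ RayN a b z :=
    csInf_le (neu_bdd a b) ⟨z, hz1, hmean, hD, rfl⟩
  have hrw : RayN a b w = (∫ x in Set.Ioo a b, (deriv w x)^2 * gauss x) /
      (∫ x in Set.Ioo a b, (w x)^2 * gauss x) := rfl
  have hle2 : RayN a b z ≤ RayN a b w + 1 := by
    rw [hrayz, hrw]
    have h2 : (∫ x in Set.Ioo a b, (w x)^2 * gauss x) /
        (∫ x in Set.Ioo a b, (z x)^2 * gauss x)
        ≤ ((∫ x in Set.Ioo a b, (deriv w x)^2 * gauss x)
            + ∫ x in Set.Ioo a b, (w x)^2 * gauss x) /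
          (∫ x in Set.Ioo a b, (w x)^2 * gauss x) := by
      rw [div_le_div_iff₀ hDpos hEpos]
      nlinarith
    have h3 : ((∫ x in Set.Ioo a b, (deriv w x)^2 * gauss x)
            + ∫ x in Set.Ioo a b, (w x)^2 * gauss x) /
          (∫ x in Set.Ioo a b, (w x)^2 * gauss x)
        = (∫ x in Set.Ioo a b, (deriv w x)^2 * gauss x) /
          (∫ x in Set.Ioo a b, (w x)^2 * gauss x) + 1 := by
      field_simp
    rw [h3] at h2
    exact h2
  linarith

lemma gauss_int_ne {a b : ℝ} (h : a < b) : (∫ x in Set.Ioo a b, gauss x) ≠ 0 := by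
  have h1 : (∫ x in Set.Ioo a b, ((1:ℝ))^2 * gauss x) ≠ 0 :=
    int_ne_zero continuous_const (Set.mem_Ioo.mpr ⟨by linarith, by linarith⟩ :
      (a+b)/2 ∈ Set.Ioo a b) one_ne_zero
  simpa using h1

lemma dir_nonempty (a b : ℝ) (h : a < b) :
    {r | ∃ w : ℝ → ℝ, ContDiff ℝ 1 w ∧ w a = 0 ∧ w b = 0 ∧
      (∫ x in Set.Ioo a b, (w x)^2 * gauss x) ≠ 0 ∧ r = RayN a b w}.Nonempty := by
  refine ⟨RayN a b (fun x => (x - a) * (b - x)), fun x => (x - a) * (b - x),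
    (contDiff_id.sub contDiff_const).mul (contDiff_const.sub contDiff_id),
    by simp, by simp, ?_, rfl⟩
  apply int_ne_zero ((continuous_id.sub continuous_const).mul
    (continuous_const.sub continuous_id))
    (Set.mem_Ioo.mpr ⟨by linarith, by linarith⟩ : (a+b)/2 ∈ Set.Ioo a b)
  have hp : (0:ℝ) < ((a+b)/2 - a) * (b - (a+b)/2) := by nlinarith
  exact hp.ne'

lemma neu_nonempty (a b : ℝ) (h : a < b) :
    {r | ∃ z : ℝ → ℝ, ContDiff ℝ 1 z ∧ (∫ x in Set.Ioo a b, z x * gauss x) = 0 ∧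
      (∫ x in Set.Ioo a b, (z x)^2 * gauss x) ≠ 0 ∧ r = RayN a b z}.Nonempty := by
  set m : ℝ := (∫ x in Set.Ioo a b, x * gauss x) / (∫ x in Set.Ioo a b, gauss x) with hmdef
  refine ⟨RayN a b (fun x => x - m), fun x => x - m, contDiff_id.sub contDiff_const, ?_, ?_, rfl⟩
  · have hfe : (fun x => (x - m) * gauss x) = fun x => x * gauss x - m * gauss x :=
      funext fun x => by ring
    have hi1 : IntegrableOn (fun x => x * gauss x) (Set.Ioo a b) :=
      intOn (continuous_id.mul continuous_gauss)
    have hi2 : Integrable (fun x => m * gauss x) (volume.restrict (Set.Ioo a b)) :=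
      (intOn continuous_gauss).const_mul m
    rw [hfe, MeasureTheory.integral_sub hi1 hi2, MeasureTheory.integral_const_mul, hmdef]
    have hG := gauss_int_ne h
    field_simp
    ring
  · intro h0
    have hz0 := cont_int_zero (continuous_id.sub continuous_const) h0
    have h1 := hz0 ((3*a+b)/4) (Set.mem_Ioo.mpr ⟨by linarith, by linarith⟩)
    have h2 := hz0 ((a+b)/2) (Set.mem_Ioo.mpr ⟨by linarith, by linarith⟩)
    simp only [Pi.sub_apply] at h1 h2
    have : (3*a+b)/4 = (a+b)/2 := by
      have e1 : (3*a+b)/4 - m = 0 := h1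
      have e2 : (a+b)/2 - m = 0 := h2
      linarith
    linarith

theorem stmt3 (a b : ℝ) (h : a < b) : neuEig a b = dirEig a b + 1 := by
  apply le_antisymm
  · have hlb : neuEig a b - 1 ≤ dirEig a b := by
      unfold dirEig
      apply le_csInf (dir_nonempty a b h)
      rintro r ⟨w, hw1, hwa, hwb, hE, rfl⟩
      linarith [ray_le a b h hw1 hwa hwb hE]
    linarith
  · unfold neuEig
    apply le_csInf (neu_nonempty a b h)
    rintro r ⟨z, hz1, hm, hD, rfl⟩
    exact ray_ge a b h hz1 hm hD
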